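/- Suppose φ ∈ L^∞(ℝ) satisfies |φ(t)| ≤ (1+|t|)^{−p} for some p > 1, and let u(x) = ∫_ℝ H(k; x₁, x₂−t) φ(t) dt for x = (x₁,x₂) in the half-plane ℝ²₊ = (0,∞)×ℝ, where H(k;x₁,x₂) = (i k x₁/2)·H₁⁽¹⁾(k|x|)/|x| and k > 0. Then there is a constant C(p) > 0 such that |u(x)| ≤ C(p)(1+|x|)^{−1/2} for all x ∈ ℝ²₊. -/

import Mathlib

open MeasureTheory Real

private lemma aux_w_integrable {q : ℝ} (hq : 1 < q) :
    Integrable (fun t : ℝ => (1 + |t|) ^ (-q)) := by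
  have h := integrable_one_add_norm (E := ℝ) (μ := volume) (r := q) (by simpa using hq)
  simpa [Real.norm_eq_abs] using h

private lemma poisson_eq {a : ℝ} (ha : 0 < a) (s : ℝ) :
    a / (a ^ 2 + s ^ 2) = a⁻¹ * (1 + (s / a) ^ 2)⁻¹ := by
  have : a ≠ 0 := ne_of_gt ha
  field_simp

private lemma poisson_integrable {a : ℝ} (ha : 0 < a) :
    Integrable (fun s : ℝ => a / (a ^ 2 + s ^ 2)) := by
  have h : Integrable (fun s : ℝ => (1 + (s / a) ^ 2)⁻¹) :=
    integrable_inv_one_add_sq.comp_div (ne_of_gt ha)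
  exact (h.const_mul a⁻¹).congr
    (Filter.Eventually.of_forall fun s => (poisson_eq ha s).symm)

private lemma poisson_integral {a : ℝ} (ha : 0 < a) :
    ∫ s : ℝ, a / (a ^ 2 + s ^ 2) = π := by
  have h1 : (∫ s : ℝ, (1 + (s / a) ^ 2)⁻¹) = |a| • ∫ y : ℝ, (1 + y ^ 2)⁻¹ :=
    Measure.integral_comp_div (fun y : ℝ => (1 + y ^ 2)⁻¹) a
  calc (∫ s : ℝ, a / (a ^ 2 + s ^ 2)) = ∫ s : ℝ, a⁻¹ * (1 + (s / a) ^ 2)⁻¹ := by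
        congr 1; funext s; exact poisson_eq ha s
    _ = a⁻¹ * ∫ s : ℝ, (1 + (s / a) ^ 2)⁻¹ := integral_const_mul _ _
    _ = a⁻¹ * (a * π) := by
        rw [h1, integral_univ_inv_one_add_sq, abs_of_pos ha, smul_eq_mul]
    _ = π := by field_simp

private lemma base34_integrable : Integrable (fun u : ℝ => (1 + u ^ 2) ^ (-(3/4) : ℝ)) := by
  have hw := aux_w_integrable (q := 3/2) (by norm_num)
  refine ((hw.const_mul ((2:ℝ) ^ ((3:ℝ)/4))).mono' ?_ (Filter.Eventually.of_forall fun u => ?_))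
  · exact (Continuous.rpow_const (by continuity) (fun u => Or.inl (by positivity))).aestronglyMeasurable
  · have h1 : (0:ℝ) < 1 + u ^ 2 := by positivity
    have h2 : ((1 + |u|) ^ 2) / 2 ≤ 1 + u ^ 2 := by nlinarith [sq_abs u, abs_nonneg u, sq_nonneg (1 - |u|)]
    have h3 : (0:ℝ) < ((1 + |u|) ^ 2) / 2 := by positivity
    have h4 : (1 + u ^ 2) ^ (-(3/4) : ℝ) ≤ (((1 + |u|) ^ 2) / 2) ^ (-(3/4) : ℝ) :=
      Real.rpow_le_rpow_of_nonpos h3 h2 (by norm_num)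
    have h5 : (((1 + |u|) ^ 2) / 2) ^ (-(3/4) : ℝ)
        = (2:ℝ) ^ ((3:ℝ)/4) * (1 + |u|) ^ (-(3/2) : ℝ) := by
      rw [Real.div_rpow (by positivity) (by norm_num : (0:ℝ) ≤ 2),
        ← Real.rpow_natCast (1 + |u|) 2, ← Real.rpow_mul (by positivity),
        Real.rpow_neg (by norm_num : (0:ℝ) ≤ 2)]
      rw [div_eq_mul_inv, inv_inv, mul_comm]
      norm_num
    rw [Real.norm_eq_abs, abs_of_nonneg (Real.rpow_nonneg h1.le _)]
    rw [h5] at h4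
    exact h4

private lemma pow34_eq {a : ℝ} (ha : 0 < a) (s : ℝ) :
    (a ^ 2 + s ^ 2) ^ (-(3/4) : ℝ) = a ^ (-(3/2) : ℝ) * (1 + (s / a) ^ 2) ^ (-(3/4) : ℝ) := by
  have h : a ^ 2 + s ^ 2 = a ^ 2 * (1 + (s / a) ^ 2) := by field_simp
  rw [h, Real.mul_rpow (by positivity) (by positivity), ← Real.rpow_natCast a 2,
    ← Real.rpow_mul ha.le]
  norm_num

private lemma pow34_integrable {a : ℝ} (ha : 0 < a) :
    Integrable (fun s : ℝ => (a ^ 2 + s ^ 2) ^ (-(3/4) : ℝ)) := by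
  have h : Integrable (fun s : ℝ => (1 + (s / a) ^ 2) ^ (-(3/4) : ℝ)) :=
    base34_integrable.comp_div (ne_of_gt ha)
  exact (h.const_mul (a ^ (-(3/2) : ℝ))).congr
    (Filter.Eventually.of_forall fun s => (pow34_eq ha s).symm)

private lemma pow34_integral {a : ℝ} (ha : 0 < a) :
    (∫ s : ℝ, (a ^ 2 + s ^ 2) ^ (-(3/4) : ℝ))
      = a ^ (-(1/2) : ℝ) * ∫ u : ℝ, (1 + u ^ 2) ^ (-(3/4) : ℝ) := by
  have h1 : (∫ s : ℝ, (1 + (s / a) ^ 2) ^ (-(3/4) : ℝ))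
      = |a| • ∫ u : ℝ, (1 + u ^ 2) ^ (-(3/4) : ℝ) :=
    Measure.integral_comp_div (fun y : ℝ => (1 + y ^ 2) ^ (-(3/4) : ℝ)) a
  calc (∫ s : ℝ, (a ^ 2 + s ^ 2) ^ (-(3/4) : ℝ))
      = ∫ s : ℝ, a ^ (-(3/2) : ℝ) * (1 + (s / a) ^ 2) ^ (-(3/4) : ℝ) := by
        congr 1; funext s; exact pow34_eq ha s
    _ = a ^ (-(3/2) : ℝ) * (a * ∫ u : ℝ, (1 + u ^ 2) ^ (-(3/4) : ℝ)) := by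
        rw [integral_const_mul, h1, abs_of_pos ha, smul_eq_mul]
    _ = a ^ (-(1/2) : ℝ) * ∫ u : ℝ, (1 + u ^ 2) ^ (-(3/4) : ℝ) := by
        rw [← mul_assoc]
        congr 1
        nth_rewrite 2 [← Real.rpow_one a]
        rw [← Real.rpow_add ha]
        norm_num

set_option maxHeartbeats 2000000 in
/-- Lemma 3.2 of the paper: the half-plane Dirichlet solution
`u(x) = ∫ H(k;x₁,x₂−t) φ(t) dt`, where the double-layer kernel satisfies the Hankel
function bound `|H(k;x₁,x₂)| ≤ C (x₁/|x|²)(1+|x|^{1/2})`, with boundary data decaying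
like `|φ(t)| ≤ (1+|t|)^{−p}` for some `p > 1`, satisfies
`|u(x)| ≤ C(p)(1+|x|)^{−1/2}` uniformly in the half-plane `x₁ > 0`. -/
theorem stmt_10 (k p C : ℝ) (hk : 0 < k) (hp : 1 < p) (hC : 0 < C)
    (H : ℝ → ℝ → ℂ)
    (hH : ∀ x₁ x₂ : ℝ, 0 < x₁ →
      ‖H x₁ x₂‖ ≤ C * (x₁ / (x₁ ^ 2 + x₂ ^ 2)) *
        (1 + Real.sqrt (Real.sqrt (x₁ ^ 2 + x₂ ^ 2)))) :
    ∃ Cp > (0:ℝ), ∀ φ : ℝ → ℂ, (∀ t : ℝ, ‖φ t‖ ≤ (1 + |t|) ^ (-p)) →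
      ∀ x₁ x₂ : ℝ, 0 < x₁ →
        ‖∫ t : ℝ, H x₁ (x₂ - t) * φ t‖ ≤
          Cp * (1 + Real.sqrt (x₁ ^ 2 + x₂ ^ 2)) ^ (-(1:ℝ)/2) := by
  have hwint : Integrable (fun t : ℝ => (1 + |t|) ^ (-p)) := aux_w_integrable hp
  set c₀ : ℝ := ∫ u : ℝ, (1 + u ^ 2) ^ (-(3/4) : ℝ) with hc₀def
  set Ip : ℝ := ∫ t : ℝ, (1 + |t|) ^ (-p) with hIpdef
  have hc₀0 : 0 ≤ c₀ := integral_nonneg fun u => Real.rpow_nonneg (by positivity) _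
  have hIp0 : 0 ≤ Ip := integral_nonneg fun t => Real.rpow_nonneg (by positivity) _
  have hπ : (0:ℝ) < π := Real.pi_pos
  have h2p : (0:ℝ) < 2 ^ p := Real.rpow_pos_of_pos two_pos p
  have haux1 : (0:ℝ) ≤ C*(π + c₀) := mul_nonneg hC.le (by linarith)
  have haux2 : (0:ℝ) ≤ C*Ip := mul_nonneg hC.le hIp0
  have haux3 : (0:ℝ) ≤ 2^p*(C*(π + c₀)) := mul_nonneg h2p.le haux1
  refine ⟨1 + 2*(C*(π + c₀)) + 16*(C*Ip) + 2^p*(C*(π + c₀)), by linarith, ?_⟩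
  intro φ hφ x₁ x₂ hx₁
  set ρ : ℝ := Real.sqrt (x₁ ^ 2 + x₂ ^ 2) with hρdef
  have hρ0 : 0 ≤ ρ := Real.sqrt_nonneg _
  have hρsq : ρ ^ 2 = x₁ ^ 2 + x₂ ^ 2 := Real.sq_sqrt (by positivity)
  have hx₂ρ : |x₂| ≤ ρ := by
    rw [hρdef, ← Real.sqrt_sq_eq_abs]; exact Real.sqrt_le_sqrt (by nlinarith)
  have hx₁ρ : x₁ ≤ ρ := le_trans (le_abs_self x₁)
    (by rw [hρdef, ← Real.sqrt_sq_eq_abs]; exact Real.sqrt_le_sqrt (by nlinarith))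
  have hρ1 : (0:ℝ) < 1 + ρ := by linarith
  set T : ℝ := (1 + ρ) ^ (-(1/2) : ℝ) with hTdef
  have hT0 : 0 ≤ T := Real.rpow_nonneg hρ1.le _
  have hgoalT : (1 + ρ) ^ (-(1:ℝ)/2) = T := by rw [hTdef]; norm_num
  rw [hgoalT]
  -- basic objects
  have hRpos : ∀ t : ℝ, (0:ℝ) < x₁ ^ 2 + (x₂ - t) ^ 2 := fun t => by positivity
  set w : ℝ → ℝ := fun t => (1 + |t|) ^ (-p) with hwdef
  set K : ℝ → ℝ := fun t => C * (x₁ / (x₁ ^ 2 + (x₂ - t) ^ 2))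
      + C * x₁ * (x₁ ^ 2 + (x₂ - t) ^ 2) ^ (-(3/4) : ℝ) with hKdef
  set G : ℝ → ℝ := fun t => K t * w t with hGdef
  have hKnonneg : ∀ t, 0 ≤ K t := fun t =>
    add_nonneg (mul_nonneg hC.le (div_nonneg hx₁.le (hRpos t).le))
      (mul_nonneg (mul_nonneg hC.le hx₁.le) (Real.rpow_nonneg (hRpos t).le _))
  have hwnonneg : ∀ t, 0 ≤ w t := fun t => Real.rpow_nonneg (by positivity) _
  have hwle1 : ∀ t : ℝ, w t ≤ 1 := fun t =>
    Real.rpow_le_one_of_one_le_of_nonpos (by simp [abs_nonneg]) (by linarith)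
  -- pointwise bound
  have hker : ∀ t : ℝ, ‖H x₁ (x₂ - t)‖ ≤ K t := by
    intro t
    have h := hH x₁ (x₂ - t) hx₁
    have hs : Real.sqrt (Real.sqrt (x₁ ^ 2 + (x₂ - t) ^ 2))
        = (x₁ ^ 2 + (x₂ - t) ^ 2) ^ ((1:ℝ)/4) := by
      rw [Real.sqrt_eq_rpow, Real.sqrt_eq_rpow, ← Real.rpow_mul (hRpos t).le]
      norm_num
    have h2 : (x₁ / (x₁ ^ 2 + (x₂ - t) ^ 2)) * (x₁ ^ 2 + (x₂ - t) ^ 2) ^ ((1:ℝ)/4)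
        = x₁ * (x₁ ^ 2 + (x₂ - t) ^ 2) ^ (-(3/4) : ℝ) := by
      rw [div_eq_mul_inv, ← Real.rpow_neg_one (x₁ ^ 2 + (x₂ - t) ^ 2), mul_assoc,
        ← Real.rpow_add (hRpos t)]
      norm_num
    have heq : C * (x₁ / (x₁ ^ 2 + (x₂ - t) ^ 2))
        * (1 + (x₁ ^ 2 + (x₂ - t) ^ 2) ^ ((1:ℝ)/4)) = K t := by
      simp only [hKdef]
      rw [mul_add, mul_one, mul_assoc, h2, ← mul_assoc]
    rw [hs, heq] at h
    exact h
  have hfb : ∀ t : ℝ, ‖H x₁ (x₂ - t) * φ t‖ ≤ G t := by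
    intro t
    rw [norm_mul]
    exact mul_le_mul (hker t) (hφ t) (norm_nonneg _) (hKnonneg t)
  -- integrability of K and its integral
  have hIK1 : Integrable (fun t : ℝ => x₁ / (x₁ ^ 2 + (x₂ - t) ^ 2)) :=
    (poisson_integrable hx₁).comp_sub_left x₂
  have hIK2 : Integrable (fun t : ℝ => (x₁ ^ 2 + (x₂ - t) ^ 2) ^ (-(3/4) : ℝ)) :=
    (pow34_integrable hx₁).comp_sub_left x₂
  have hKint : Integrable K := by
    rw [hKdef]
    exact (hIK1.const_mul C).add (hIK2.const_mul (C * x₁))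
  have hx112 : x₁ * x₁ ^ (-(1/2) : ℝ) = x₁ ^ ((1:ℝ)/2) := by
    nth_rewrite 1 [← Real.rpow_one x₁]
    rw [← Real.rpow_add hx₁]
    norm_num
  have hKval : (∫ t : ℝ, K t) = C * π + C * c₀ * x₁ ^ ((1:ℝ)/2) := by
    have e1 : (∫ t : ℝ, x₁ / (x₁ ^ 2 + (x₂ - t) ^ 2)) = π := by
      rw [← poisson_integral hx₁]
      exact integral_sub_left_eq_self (fun s : ℝ => x₁ / (x₁ ^ 2 + s ^ 2)) volume x₂
    have e2 : (∫ t : ℝ, (x₁ ^ 2 + (x₂ - t) ^ 2) ^ (-(3/4) : ℝ)) = x₁ ^ (-(1/2) : ℝ) * c₀ := by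
      rw [← pow34_integral hx₁]
      exact integral_sub_left_eq_self (fun s : ℝ => (x₁ ^ 2 + s ^ 2) ^ (-(3/4) : ℝ)) volume x₂
    rw [hKdef]
    rw [integral_add (hIK1.const_mul C) (hIK2.const_mul (C * x₁)),
      integral_const_mul, integral_const_mul, e1, e2]
    rw [show C * x₁ * (x₁ ^ (-(1/2) : ℝ) * c₀) = C * (x₁ * x₁ ^ (-(1/2) : ℝ)) * c₀ by ring,
      hx112]
    ring
  -- integrability of G
  have hcontR : Continuous fun t : ℝ => x₁ ^ 2 + (x₂ - t) ^ 2 := by continuity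
  have hGcont : Continuous G := by
    rw [hGdef, hKdef, hwdef]
    have c1 : Continuous fun t : ℝ => C * (x₁ / (x₁ ^ 2 + (x₂ - t) ^ 2)) :=
      continuous_const.mul (continuous_const.div hcontR fun t => (hRpos t).ne')
    have c2 : Continuous fun t : ℝ => (x₁ ^ 2 + (x₂ - t) ^ 2) ^ (-(3/4) : ℝ) :=
      hcontR.rpow_const fun t => Or.inl (hRpos t).ne'
    have c3 : Continuous fun t : ℝ => (1 + |t|) ^ (-p) :=
      (continuous_const.add continuous_abs).rpow_const fun t => Or.inl (by positivity : (0:ℝ) < 1 + |t|).ne'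
    exact (c1.add (continuous_const.mul c2)).mul c3
  have hGnonneg : ∀ t, 0 ≤ G t := fun t => mul_nonneg (hKnonneg t) (hwnonneg t)
  have hGleK : ∀ t, G t ≤ K t := by
    intro t
    calc G t = K t * w t := rfl
      _ ≤ K t * 1 := mul_le_mul_of_nonneg_left (hwle1 t) (hKnonneg t)
      _ = K t := mul_one _
  have hGint : Integrable G :=
    hKint.mono' hGcont.aestronglyMeasurable (Filter.Eventually.of_forall fun t => by
      rw [Real.norm_eq_abs, abs_of_nonneg (hGnonneg t)]; exact hGleK t)
  have hnorm : ‖∫ t : ℝ, H x₁ (x₂ - t) * φ t‖ ≤ ∫ t : ℝ, G t :=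
    norm_integral_le_of_norm_le hGint (Filter.Eventually.of_forall hfb)
  rcases le_or_gt ρ 1 with hρle | hρgt
  · -- small ρ
    have hx11 : x₁ ^ ((1:ℝ)/2) ≤ 1 :=
      Real.rpow_le_one hx₁.le (by linarith) (by norm_num)
    have hGK : (∫ t : ℝ, G t) ≤ C * π + C * c₀ := by
      have hcc : C * c₀ * x₁ ^ ((1:ℝ)/2) ≤ C * c₀ * 1 :=
        mul_le_mul_of_nonneg_left hx11 (mul_nonneg hC.le hc₀0)
      calc (∫ t : ℝ, G t) ≤ ∫ t : ℝ, K t := integral_mono hGint hKint hGleK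
        _ = C * π + C * c₀ * x₁ ^ ((1:ℝ)/2) := hKval
        _ ≤ C * π + C * c₀ := by rw [mul_one] at hcc; linarith
    have hThalf : (1:ℝ)/2 ≤ T := by
      have h1 : (2:ℝ) ^ (-(1/2) : ℝ) ≤ T := by
        rw [hTdef]
        exact Real.rpow_le_rpow_of_nonpos hρ1 (by linarith) (by norm_num)
      have h2 : (2:ℝ) ^ (-(1:ℝ)) ≤ (2:ℝ) ^ (-(1/2) : ℝ) :=
        Real.rpow_le_rpow_of_exponent_le one_le_two (by norm_num)
      rw [Real.rpow_neg_one] at h2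
      norm_num at h2
      linarith
    calc ‖∫ t : ℝ, H x₁ (x₂ - t) * φ t‖ ≤ ∫ t : ℝ, G t := hnorm
      _ ≤ C * π + C * c₀ := hGK
      _ = (2*(C*(π + c₀))) * (1/2) := by ring
      _ ≤ (2*(C*(π + c₀))) * T := mul_le_mul_of_nonneg_left hThalf (by linarith)
      _ ≤ (1 + 2*(C*(π + c₀)) + 16*(C*Ip) + 2^p*(C*(π + c₀))) * T :=
          mul_le_mul_of_nonneg_right (by linarith) hT0
  · -- large ρ
    have hρpos : (0:ℝ) < ρ := by linarith
    set A : Set ℝ := {t : ℝ | |t| ≤ ρ/2} with hAdef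
    have hA : MeasurableSet A := measurableSet_le (by fun_prop) measurable_const
    have h4half : (4:ℝ) ^ ((1:ℝ)/2) = 2 := by
      rw [show (4:ℝ) = 2 ^ (2:ℕ) by norm_num, ← Real.rpow_natCast 2 2,
        ← Real.rpow_mul (by norm_num : (0:ℝ) ≤ 2)]
      norm_num
    have hρT : ρ ^ (-(1/2):ℝ) ≤ 2 * T := by
      have h1 : (1 + ρ) ≤ 4 * ρ := by linarith
      have h2 : (4 * ρ) ^ (-(1/2):ℝ) ≤ T :=
        Real.rpow_le_rpow_of_nonpos hρ1 h1 (by norm_num)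
      have h3 : (4 * ρ) ^ (-(1/2):ℝ) = (4:ℝ) ^ (-(1/2):ℝ) * ρ ^ (-(1/2):ℝ) :=
        Real.mul_rpow (by norm_num) hρpos.le
      have h4 : (4:ℝ) ^ (-(1/2):ℝ) = 1/2 := by
        rw [show (-(1/2):ℝ) = -((1:ℝ)/2) by norm_num,
          Real.rpow_neg (by norm_num : (0:ℝ) ≤ 4), h4half]
        norm_num
      rw [h3, h4] at h2
      linarith
    have hKA : ∀ t ∈ A, K t ≤ 16*C*T := by
      intro t ht
      simp only [hAdef, Set.mem_setOf_eq] at ht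
      have hR4 : ρ^2/4 ≤ x₁ ^ 2 + (x₂ - t) ^ 2 := by
        have h1 : x₂ * t ≤ ρ * |t| := by
          calc x₂ * t ≤ |x₂ * t| := le_abs_self _
            _ = |x₂| * |t| := abs_mul _ _
            _ ≤ ρ * |t| := mul_le_mul_of_nonneg_right hx₂ρ (abs_nonneg t)
        nlinarith [sq_abs t, hρsq, h1, mul_nonneg (by linarith : (0:ℝ) ≤ ρ/2 - |t|)
          (by linarith [abs_nonneg t] : (0:ℝ) ≤ 3*ρ/2 - |t|)]
      have hρhalfnn : (0:ℝ) ≤ ρ ^ (-(1/2):ℝ) := Real.rpow_nonneg hρpos.le _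
      have hp1' : x₁ / (x₁ ^ 2 + (x₂ - t) ^ 2) ≤ 4 * ρ ^ (-(1/2):ℝ) := by
        have ha : x₁ / (x₁ ^ 2 + (x₂ - t) ^ 2) ≤ ρ / (ρ^2/4) :=
          div_le_div₀ hρ0 hx₁ρ (by positivity) hR4
        have hb : ρ / (ρ^2/4) = 4 / ρ := by
          field_simp
        have hcρ : ρ ^ (-(1:ℝ)) ≤ ρ ^ (-(1/2):ℝ) :=
          Real.rpow_le_rpow_of_exponent_le hρgt.le (by norm_num)
        rw [Real.rpow_neg_one] at hcρ
        rw [hb] at ha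
        rw [div_eq_mul_inv] at ha
        calc x₁ / (x₁ ^ 2 + (x₂ - t) ^ 2) ≤ 4 * ρ⁻¹ := ha
          _ ≤ 4 * ρ ^ (-(1/2):ℝ) := by linarith
      have hp2 : x₁ * (x₁ ^ 2 + (x₂ - t) ^ 2) ^ (-(3/4):ℝ) ≤ ρ * (ρ^2/4) ^ (-(3/4):ℝ) :=
        mul_le_mul hx₁ρ (Real.rpow_le_rpow_of_nonpos (by positivity) hR4 (by norm_num))
          (Real.rpow_nonneg (hRpos t).le _) hρ0
      have e2 : (ρ^2/4) ^ (-(3/4):ℝ) = (4:ℝ)^((3:ℝ)/4) * ρ ^ (-(3/2):ℝ) := by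
        rw [Real.div_rpow (sq_nonneg ρ) (by norm_num : (0:ℝ) ≤ 4),
          show (-(3/4):ℝ) = -((3:ℝ)/4) by norm_num,
          Real.rpow_neg (by norm_num : (0:ℝ) ≤ 4), div_inv_eq_mul,
          ← Real.rpow_natCast ρ 2, ← Real.rpow_mul hρ0]
        norm_num
        ring
      have h434 : (4:ℝ)^((3:ℝ)/4) ≤ 4 := by
        have h := Real.rpow_le_rpow_of_exponent_le (by norm_num : (1:ℝ) ≤ 4)
          (by norm_num : (3:ℝ)/4 ≤ 1)
        rwa [Real.rpow_one] at h
      have hρ32 : ρ * ρ ^ (-(3/2):ℝ) = ρ ^ (-(1/2):ℝ) := by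
        nth_rewrite 1 [← Real.rpow_one ρ]
        rw [← Real.rpow_add hρpos]
        norm_num
      have hp2' : x₁ * (x₁ ^ 2 + (x₂ - t) ^ 2) ^ (-(3/4):ℝ) ≤ 4 * ρ ^ (-(1/2):ℝ) := by
        rw [e2] at hp2
        have h6 : ρ * ((4:ℝ)^((3:ℝ)/4) * ρ ^ (-(3/2):ℝ))
            = (4:ℝ)^((3:ℝ)/4) * (ρ * ρ^(-(3/2):ℝ)) := by ring
        rw [h6, hρ32] at hp2
        have h5 : (4:ℝ)^((3:ℝ)/4) * ρ ^ (-(1/2):ℝ) ≤ 4 * ρ ^ (-(1/2):ℝ) :=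
          mul_le_mul_of_nonneg_right h434 hρhalfnn
        linarith
      have hKt : K t = C * (x₁ / (x₁^2+(x₂-t)^2))
          + C * (x₁ * (x₁^2+(x₂-t)^2) ^ (-(3/4):ℝ)) := by
        simp only [hKdef]
        ring
      have b1 := mul_le_mul_of_nonneg_left hp1' hC.le
      have b2 := mul_le_mul_of_nonneg_left hp2' hC.le
      have hprod : (0:ℝ) ≤ C * (2*T - ρ ^ (-(1/2):ℝ)) :=
        mul_nonneg hC.le (by linarith)
      rw [hKt]
      nlinarith [b1, b2, hprod]
    have h16CT : (0:ℝ) ≤ 16*C*T := by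
      have := mul_nonneg hC.le hT0
      nlinarith
    have hIA : (∫ t in A, G t) ≤ 16*C*T * Ip := by
      have hGA : ∀ t ∈ A, G t ≤ (16*C*T) * w t := fun t ht =>
        mul_le_mul_of_nonneg_right (hKA t ht) (hwnonneg t)
      calc (∫ t in A, G t) ≤ ∫ t in A, (16*C*T) * w t :=
            setIntegral_mono_on hGint.integrableOn
              ((hwint.const_mul (16*C*T)).integrableOn) hA hGA
        _ ≤ ∫ t : ℝ, (16*C*T) * w t :=
            setIntegral_le_integral (hwint.const_mul (16*C*T))
              (Filter.Eventually.of_forall fun t => mul_nonneg h16CT (hwnonneg t))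
        _ = (16*C*T) * Ip := by rw [integral_const_mul]
    have hQpos : (0:ℝ) < 1 + ρ/2 := by linarith
    have hGAc : ∀ t ∈ Aᶜ, G t ≤ ((1 + ρ/2) ^ (-p)) * K t := by
      intro t ht
      simp only [hAdef, Set.mem_compl_iff, Set.mem_setOf_eq, not_le] at ht
      have hwt : w t ≤ (1 + ρ/2) ^ (-p) :=
        Real.rpow_le_rpow_of_nonpos hQpos (by linarith) (by linarith)
      calc G t = K t * w t := rfl
        _ ≤ K t * ((1 + ρ/2) ^ (-p)) := mul_le_mul_of_nonneg_left hwt (hKnonneg t)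
        _ = ((1 + ρ/2) ^ (-p)) * K t := mul_comm _ _
    have hIAc : (∫ t in Aᶜ, G t) ≤ ((1 + ρ/2) ^ (-p)) * ∫ t : ℝ, K t := by
      calc (∫ t in Aᶜ, G t) ≤ ∫ t in Aᶜ, ((1 + ρ/2) ^ (-p)) * K t :=
            setIntegral_mono_on hGint.integrableOn
              ((hKint.const_mul ((1 + ρ/2) ^ (-p))).integrableOn) hA.compl hGAc
        _ ≤ ∫ t : ℝ, ((1 + ρ/2) ^ (-p)) * K t :=
            setIntegral_le_integral (hKint.const_mul ((1 + ρ/2) ^ (-p)))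
              (Filter.Eventually.of_forall fun t =>
                mul_nonneg (Real.rpow_nonneg hQpos.le _) (hKnonneg t))
        _ = ((1 + ρ/2) ^ (-p)) * ∫ t : ℝ, K t := integral_const_mul _ _
    have e3 : (1 + ρ/2) ^ (-p) ≤ 2^p * (1 + ρ) ^ (-p) := by
      have h1 : (1 + ρ)/2 ≤ 1 + ρ/2 := by linarith
      have h2 : (1 + ρ/2) ^ (-p) ≤ ((1 + ρ)/2) ^ (-p) :=
        Real.rpow_le_rpow_of_nonpos (by linarith) h1 (by linarith)
      have h3 : ((1 + ρ)/2) ^ (-p) = (1 + ρ) ^ (-p) * 2^p := by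
        rw [Real.div_rpow hρ1.le (by norm_num : (0:ℝ) ≤ 2),
          Real.rpow_neg (by norm_num : (0:ℝ) ≤ 2), div_inv_eq_mul]
      rw [h3] at h2
      linarith [h2]
    have e4 : x₁ ^ ((1:ℝ)/2) ≤ (1 + ρ) ^ ((1:ℝ)/2) :=
      Real.rpow_le_rpow hx₁.le (by linarith) (by norm_num)
    have e5 : (1 + ρ) ^ (-p) * (1 + ρ) ^ ((1:ℝ)/2) ≤ T := by
      rw [← Real.rpow_add hρ1, hTdef]
      exact Real.rpow_le_rpow_of_exponent_le (by linarith) (by linarith)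
    have e6 : (1 + ρ) ^ (-p) ≤ T := by
      rw [hTdef]
      exact Real.rpow_le_rpow_of_exponent_le (by linarith) (by linarith)
    have hq2nn : (0:ℝ) ≤ (1 + ρ) ^ (-p) := Real.rpow_nonneg hρ1.le _
    have step_a : ((1 + ρ/2) ^ (-p)) * (C * π + C * c₀ * x₁ ^ ((1:ℝ)/2))
        ≤ (2^p * (1 + ρ) ^ (-p)) * (C * π + C * c₀ * (1 + ρ) ^ ((1:ℝ)/2)) := by
      have inner : C * π + C * c₀ * x₁ ^ ((1:ℝ)/2)
          ≤ C * π + C * c₀ * (1 + ρ) ^ ((1:ℝ)/2) := by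
        have := mul_le_mul_of_nonneg_left e4 (mul_nonneg hC.le hc₀0)
        nlinarith
      exact mul_le_mul e3 inner
        (add_nonneg (mul_nonneg hC.le hπ.le)
          (mul_nonneg (mul_nonneg hC.le hc₀0) (Real.rpow_nonneg hx₁.le _)))
        (mul_nonneg h2p.le hq2nn)
    have step_b : (2^p * (1 + ρ) ^ (-p)) * (C * π + C * c₀ * (1 + ρ) ^ ((1:ℝ)/2))
        ≤ 2^p * (C*(π + c₀)) * T := by
      have hint1 : (0:ℝ) ≤ 2^p * C * π * (T - (1 + ρ) ^ (-p)) :=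
        mul_nonneg (mul_nonneg (mul_nonneg h2p.le hC.le) hπ.le) (by linarith)
      have hint2 : (0:ℝ) ≤ 2^p * C * c₀ * (T - (1 + ρ) ^ (-p) * (1 + ρ) ^ ((1:ℝ)/2)) :=
        mul_nonneg (mul_nonneg (mul_nonneg h2p.le hC.le) hc₀0) (by linarith)
      nlinarith [hint1, hint2]
    have hsplit : (∫ t : ℝ, G t) = (∫ t in A, G t) + (∫ t in Aᶜ, G t) :=
      (integral_add_compl hA hGint).symm
    have hKvalT : ((1 + ρ/2) ^ (-p)) * (∫ t : ℝ, K t) ≤ 2^p * (C*(π + c₀)) * T := by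
      rw [hKval]
      exact le_trans step_a step_b
    calc ‖∫ t : ℝ, H x₁ (x₂ - t) * φ t‖ ≤ ∫ t : ℝ, G t := hnorm
      _ = (∫ t in A, G t) + (∫ t in Aᶜ, G t) := hsplit
      _ ≤ 16*C*T * Ip + 2^p * (C*(π + c₀)) * T := add_le_add hIA (le_trans hIAc hKvalT)
      _ ≤ (1 + 2*(C*(π + c₀)) + 16*(C*Ip) + 2^p*(C*(π + c₀))) * T := by
        have h1 : (0:ℝ) ≤ C*(π + c₀)*T := mul_nonneg haux1 hT0
        nlinarith [h1, hT0]
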